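/- (Proposition 3.) Let M ∈ ℝ^{k×k} be symmetric positive semidefinite. Suppose there exist x₀ ∈ ℝ^p and Λ₀ ∈ ℝ^{m×ℓ} such that (x₀, V₀, Λ₀) ∈ F(V₀). Suppose a sequence (x_t, V_t, Λ_t), t ≥ 1, satisfies for every t ≥ 0: (x_{t+1}, V_{t+1}, Λ_{t+1}) ∈ F(V_t), and Tr(M H_{A₀}(V_{t+1}, V_t)) ≤ Tr(M H_{A₀}(V, V_t)) for every (x, V, Λ) ∈ F(V_t). Then for every t ≥ 0: (i) F(V_t) is nonempty (indeed (x_t, V_t, Λ_t) ∈ F(V_t) for t ≥ 1 and (x₀, V₀, Λ₀) ∈ F(V₀)); and (ii) Tr(M V_{t+1}ᴴ A₀ V_{t+1}) ≤ Tr(M V_tᴴ A₀ V_t). -/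

import Mathlib

open Matrix ComplexOrder

/-- The first standard basis vector `e₁ ∈ ℝ^k`. -/
def e1 (k : ℕ) [NeZero k] : Fin k → ℝ := Pi.single 0 1

/-- `H_A(V, Z) = Vᴴ A⁺ V + Zᴴ A⁻ V + Vᴴ A⁻ Z − Zᴴ A⁻ Z`. -/
noncomputable def Hmat {n k : ℕ} (Ap Am : Matrix (Fin n) (Fin n) ℂ)
    (V Z : Matrix (Fin n) (Fin k) ℂ) : Matrix (Fin k) (Fin k) ℂ :=
  Vᴴ * Ap * V + Zᴴ * Am * V + Vᴴ * Am * Z - Zᴴ * Am * Z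

/-- The feasible set `F(Z)` of problem `P_III(Z)`: triples `(x, V, Λ)` with `Λ`
entrywise nonpositive, `Ex ≤ f` entrywise, and, for each `i ∈ {1,…,m}`,
`H_{Aᵢ}(V, Z) − Cᵢ + (bᵢᵀx)·e₁e₁ᵀ − Σⱼ Λᵢⱼ Wⱼ ⪯ 0` in the Loewner order
(real matrices coerced to complex). -/
def Feas {n k ℓ m p q : ℕ} [NeZero k]
    (W : Fin ℓ → Matrix (Fin k) (Fin k) ℝ)
    (Ap Am : Fin m → Matrix (Fin n) (Fin n) ℂ)
    (C : Fin m → Matrix (Fin k) (Fin k) ℝ)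
    (b : Fin m → (Fin p → ℝ))
    (E : Matrix (Fin q) (Fin p) ℝ) (f : Fin q → ℝ)
    (Z : Matrix (Fin n) (Fin k) ℂ)
    (x : Fin p → ℝ) (V : Matrix (Fin n) (Fin k) ℂ)
    (Λ : Matrix (Fin m) (Fin ℓ) ℝ) : Prop :=
  (∀ i j, Λ i j ≤ 0) ∧ (∀ i, (E *ᵥ x) i ≤ f i) ∧
  ∀ i : Fin m,
    (-(Hmat (Ap i) (Am i) V Z - (C i).map Complex.ofReal
        + (((b i ⬝ᵥ x) • vecMulVec (e1 k) (e1 k)).map Complex.ofReal)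
        - ∑ j, ((Λ i j • W j).map Complex.ofReal))).PosSemidef

lemma psd_trace_re_nonneg {k : ℕ} {X : Matrix (Fin k) (Fin k) ℂ} (hX : X.PosSemidef) :
    0 ≤ X.trace.re := by
  have h : ∀ i, 0 ≤ X i i := fun i => by
    exact hX.diag_nonneg
  have : (0 : ℂ) ≤ X.trace := by
    rw [Matrix.trace]
    exact Finset.sum_nonneg fun i _ => h i
  exact (Complex.le_def.mp this).1

open scoped MatrixOrder in
lemma psd_exists_eq_conjTranspose_mul_self {𝕜 : Type*} [RCLike 𝕜] {k : ℕ}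
    {M : Matrix (Fin k) (Fin k) 𝕜} (hM : M.PosSemidef) :
    ∃ B : Matrix (Fin k) (Fin k) 𝕜, M = Bᴴ * B := by
  classical
  exact CStarAlgebra.nonneg_iff_eq_star_mul_self.mp hM.nonneg

lemma map_psd {k : ℕ} {M : Matrix (Fin k) (Fin k) ℝ} (hM : M.PosSemidef) :
    (M.map Complex.ofReal).PosSemidef := by
  obtain ⟨B, rfl⟩ : ∃ B, M = Bᴴ * B := by
    exact psd_exists_eq_conjTranspose_mul_self hM
  have : (Bᴴ * B).map Complex.ofReal = (B.map Complex.ofReal)ᴴ * (B.map Complex.ofReal) := by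
    ext i j
    simp [Matrix.mul_apply, Matrix.conjTranspose_apply]
  rw [this]
  exact posSemidef_conjTranspose_mul_self _

lemma trace_re_mono {k : ℕ} {M A B : Matrix (Fin k) (Fin k) ℂ} (hM : M.PosSemidef)
    (h : (B - A).PosSemidef) : (M * A).trace.re ≤ (M * B).trace.re := by
  obtain ⟨S, rfl⟩ : ∃ S, M = Sᴴ * S := by
    exact psd_exists_eq_conjTranspose_mul_self hM
  have h1 : (Sᴴ * S * (B - A)).trace = (S * (B - A) * Sᴴ).trace := by
    rw [Matrix.trace_mul_cycle, Matrix.trace_mul_cycle]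
  have h2 : 0 ≤ (S * (B - A) * Sᴴ).trace.re :=
    psd_trace_re_nonneg (h.mul_mul_conjTranspose_same S)
  rw [← h1, Matrix.mul_sub, Matrix.trace_sub, Complex.sub_re] at h2
  linarith

lemma Hmat_decomp {n k : ℕ} (Ap Am : Matrix (Fin n) (Fin n) ℂ)
    (V Z : Matrix (Fin n) (Fin k) ℂ) :
    Hmat Ap Am V Z = Vᴴ * (Ap + Am) * V + (V - Z)ᴴ * (-Am) * (V - Z) := by
  simp only [Hmat, conjTranspose_sub, Matrix.sub_mul, Matrix.mul_sub, Matrix.neg_mul,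
    Matrix.mul_neg, Matrix.add_mul, Matrix.mul_add, neg_sub, neg_neg, sub_neg_eq_add]
  abel

lemma Hmat_self {n k : ℕ} (Ap Am : Matrix (Fin n) (Fin n) ℂ)
    (V : Matrix (Fin n) (Fin k) ℂ) :
    Hmat Ap Am V V = Vᴴ * (Ap + Am) * V := by
  rw [Hmat_decomp]
  simp

/-- If `(x, V, Λ)` is feasible for `F(Z)`, then it is feasible for `F(V)`. -/
lemma feas_self {n k ℓ m p q : ℕ} [NeZero k]
    (W : Fin ℓ → Matrix (Fin k) (Fin k) ℝ)
    (Ap Am : Fin m → Matrix (Fin n) (Fin n) ℂ)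
    (hAm : ∀ i, (-(Am i)).PosSemidef)
    (C : Fin m → Matrix (Fin k) (Fin k) ℝ)
    (b : Fin m → (Fin p → ℝ))
    (E : Matrix (Fin q) (Fin p) ℝ) (f : Fin q → ℝ)
    (Z : Matrix (Fin n) (Fin k) ℂ)
    (x : Fin p → ℝ) (V : Matrix (Fin n) (Fin k) ℂ)
    (Λ : Matrix (Fin m) (Fin ℓ) ℝ)
    (h : Feas W Ap Am C b E f Z x V Λ) : Feas W Ap Am C b E f V x V Λ := by
  refine ⟨h.1, h.2.1, fun i => ?_⟩
  have key : Hmat (Ap i) (Am i) V Z - Hmat (Ap i) (Am i) V V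
      = (V - Z)ᴴ * (-(Am i)) * (V - Z) := by
    rw [Hmat_decomp, Hmat_self]
    abel
  have h2 := (h.2.2 i).add ((hAm i).conjTranspose_mul_mul_same (V - Z))
  rw [← key] at h2
  convert h2 using 1
  abel

/-- **Proposition 3.** Let `M ∈ ℝ^{k×k}` be symmetric positive
semidefinite.  Suppose `(x₀, V₀, Λ₀) ∈ F(V₀)`, and a sequence `(x_t, V_t, Λ_t)`
satisfies, for every `t ≥ 0`, `(x_{t+1}, V_{t+1}, Λ_{t+1}) ∈ F(V_t)` together with the
optimality condition `Tr(M H_{A₀}(V_{t+1}, V_t)) ≤ Tr(M H_{A₀}(V, V_t))` for every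
`(x, V, Λ) ∈ F(V_t)`.  Then for every `t ≥ 0`: (i) `(x_t, V_t, Λ_t) ∈ F(V_t)` (so
`F(V_t)` is nonempty), and (ii)
`Tr(M V_{t+1}ᴴ A₀ V_{t+1}) ≤ Tr(M V_tᴴ A₀ V_t)`. -/
theorem stmt8 {n k ℓ m p q : ℕ} [NeZero k]
    (W : Fin ℓ → Matrix (Fin k) (Fin k) ℝ) (hW : ∀ j, (W j).IsSymm)
    (A₀ Ap₀ Am₀ : Matrix (Fin n) (Fin n) ℂ) (hA₀ : A₀.IsHermitian)
    (hAp₀ : Ap₀.PosSemidef) (hAm₀ : (-Am₀).PosSemidef) (hdec₀ : A₀ = Ap₀ + Am₀)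
    (A Ap Am : Fin m → Matrix (Fin n) (Fin n) ℂ)
    (hA : ∀ i, (A i).IsHermitian)
    (hAp : ∀ i, (Ap i).PosSemidef) (hAm : ∀ i, (-(Am i)).PosSemidef)
    (hdec : ∀ i, A i = Ap i + Am i)
    (C : Fin m → Matrix (Fin k) (Fin k) ℝ) (hC : ∀ i, (C i).IsSymm)
    (b : Fin m → (Fin p → ℝ))
    (E : Matrix (Fin q) (Fin p) ℝ) (f : Fin q → ℝ)
    (M : Matrix (Fin k) (Fin k) ℝ) (hM : M.PosSemidef)
    (xs : ℕ → (Fin p → ℝ)) (Vs : ℕ → Matrix (Fin n) (Fin k) ℂ)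
    (Ls : ℕ → Matrix (Fin m) (Fin ℓ) ℝ)
    (h0 : Feas W Ap Am C b E f (Vs 0) (xs 0) (Vs 0) (Ls 0))
    (hstep : ∀ t : ℕ, Feas W Ap Am C b E f (Vs t) (xs (t + 1)) (Vs (t + 1)) (Ls (t + 1)))
    (hopt : ∀ t : ℕ, ∀ x : Fin p → ℝ, ∀ V : Matrix (Fin n) (Fin k) ℂ,
      ∀ Λ : Matrix (Fin m) (Fin ℓ) ℝ, Feas W Ap Am C b E f (Vs t) x V Λ →
        ((M.map Complex.ofReal) * Hmat Ap₀ Am₀ (Vs (t + 1)) (Vs t)).trace.re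
          ≤ ((M.map Complex.ofReal) * Hmat Ap₀ Am₀ V (Vs t)).trace.re) :
    ∀ t : ℕ,
      Feas W Ap Am C b E f (Vs t) (xs t) (Vs t) (Ls t) ∧
      ((M.map Complex.ofReal) * ((Vs (t + 1))ᴴ * A₀ * (Vs (t + 1)))).trace.re
        ≤ ((M.map Complex.ofReal) * ((Vs t)ᴴ * A₀ * (Vs t))).trace.re := by
  have hMc : (M.map Complex.ofReal).PosSemidef := map_psd hM
  have hfeas : ∀ t : ℕ, Feas W Ap Am C b E f (Vs t) (xs t) (Vs t) (Ls t) := by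
    intro t
    cases t with
    | zero => exact h0
    | succ s => exact feas_self W Ap Am hAm C b E f (Vs s) _ _ _ (hstep s)
  intro t
  refine ⟨hfeas t, ?_⟩
  -- Step 1: Tr(M V₊ᴴ A₀ V₊) ≤ Tr(M H(V₊, Vₜ))
  have step1 : ((M.map Complex.ofReal) * ((Vs (t + 1))ᴴ * A₀ * (Vs (t + 1)))).trace.re
      ≤ ((M.map Complex.ofReal) * Hmat Ap₀ Am₀ (Vs (t + 1)) (Vs t)).trace.re := by
    apply trace_re_mono hMc
    have : Hmat Ap₀ Am₀ (Vs (t + 1)) (Vs t) - (Vs (t + 1))ᴴ * A₀ * (Vs (t + 1))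
        = (Vs (t + 1) - Vs t)ᴴ * (-Am₀) * (Vs (t + 1) - Vs t) := by
      rw [Hmat_decomp, hdec₀]
      abel
    rw [this]
    exact hAm₀.conjTranspose_mul_mul_same _
  -- Step 2: Tr(M H(V₊, Vₜ)) ≤ Tr(M H(Vₜ, Vₜ)) = Tr(M Vₜᴴ A₀ Vₜ)
  have step2 := hopt t (xs t) (Vs t) (Ls t) (hfeas t)
  rw [Hmat_self, ← hdec₀] at step2
  linarith
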